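/- The language {a^m b^(n+1) a^(m+1) b^n : m, n ≥ 1} over {a,b} is not context-free; consequently the shuffle of the context-free languages {a^n b a^n : n ≥ 1} and {b^n a b^n : n ≥ 1} is not context-free. -/

import Mathlib

/-- `Shuffle u v w` means `w` is an interleaving (shuffle) of `u` and `v`. -/
inductive Shuffle {α : Type*} : List α → List α → List α → Prop
  | nil : Shuffle [] [] []
  | left {a : α} {u v w : List α} : Shuffle u v w → Shuffle (a :: u) v (a :: w)
  | right {a : α} {u v w : List α} : Shuffle u v w → Shuffle u (a :: v) (a :: w)

/-- The two-letter alphabet {a, b}. -/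
inductive AB : Type
  | a : AB
  | b : AB

/-- The shuffle of two languages. -/
def LShuffle {α : Type*} (L₁ L₂ : Language α) : Language α :=
  {w | ∃ u ∈ L₁, ∃ v ∈ L₂, Shuffle u v w}


namespace PumpCFG

open ContextFreeGrammar

universe uT uN
variable {T : Type uT}

/-- Parse forests for a context-free grammar. -/
inductive PF (g : ContextFreeGrammar.{uT} T) : List (Symbol T g.NT) → Type uT
  | nil : PF g []
  | term (t : T) {s : List (Symbol T g.NT)} (f : PF g s) : PF g (Symbol.terminal t :: s)
  | node (A : g.NT) (r : ContextFreeRule T g.NT) (hr : r ∈ g.rules) (hA : r.input = A)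
      {s : List (Symbol T g.NT)} (c : PF g r.output) (f : PF g s) :
      PF g (Symbol.nonterminal A :: s)

namespace PF

variable {g : ContextFreeGrammar.{uT} T}

def yieldPF : ∀ {s : List (Symbol T g.NT)}, PF g s → List T
  | _, nil => []
  | _, term t f => t :: yieldPF f
  | _, node _ _ _ _ c f => yieldPF c ++ yieldPF f

def sizePF : ∀ {s : List (Symbol T g.NT)}, PF g s → ℕ
  | _, nil => 0
  | _, term _ f => sizePF f + 1
  | _, node _ _ _ _ c f => sizePF c + sizePF f + 1

def hgt : ∀ {s : List (Symbol T g.NT)}, PF g s → ℕ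
  | _, nil => 0
  | _, term _ f => max 1 (hgt f)
  | _, node _ _ _ _ c f => max (hgt c + 1) (hgt f)

@[simp] lemma yield_nil : (nil : PF g []).yieldPF = [] := rfl
@[simp] lemma yield_term {t : T} {s} (f : PF g s) : (term t f).yieldPF = t :: f.yieldPF := rfl
@[simp] lemma yield_node {A r hr hA s} (c : PF g r.output) (f : PF g s) :
    (node A r hr hA c f).yieldPF = c.yieldPF ++ f.yieldPF := rfl
@[simp] lemma size_nil : (nil : PF g []).sizePF = 0 := rfl
@[simp] lemma size_term {t : T} {s} (f : PF g s) : (term t f).sizePF = f.sizePF + 1 := rfl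
@[simp] lemma size_node {A r hr hA s} (c : PF g r.output) (f : PF g s) :
    (node A r hr hA c f).sizePF = c.sizePF + f.sizePF + 1 := rfl
@[simp] lemma hgt_nil : (nil : PF g []).hgt = 0 := rfl
@[simp] lemma hgt_term {t : T} {s} (f : PF g s) : (term t f).hgt = max 1 f.hgt := rfl
@[simp] lemma hgt_node {A r hr hA s} (c : PF g r.output) (f : PF g s) :
    (node A r hr hA c f).hgt = max (c.hgt + 1) f.hgt := rfl

def app : ∀ {x y : List (Symbol T g.NT)}, PF g x → PF g y → PF g (x ++ y)
  | _, _, nil, f2 => f2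
  | _, _, term t f, f2 => term t (app f f2)
  | _, _, node A r hr hA c f, f2 => node A r hr hA c (app f f2)

@[simp] lemma yield_app : ∀ {x y : List (Symbol T g.NT)} (f1 : PF g x) (f2 : PF g y),
    (app f1 f2).yieldPF = f1.yieldPF ++ f2.yieldPF
  | _, _, nil, f2 => rfl
  | _, _, term t f, f2 => by simp [app, yield_app f f2]
  | _, _, node A r hr hA c f, f2 => by simp [app, yield_app f f2]

@[simp] lemma size_app : ∀ {x y : List (Symbol T g.NT)} (f1 : PF g x) (f2 : PF g y),
    (app f1 f2).sizePF = f1.sizePF + f2.sizePF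
  | _, _, nil, f2 => by simp [app]
  | _, _, term t f, f2 => by simp [app, size_app f f2]; omega
  | _, _, node A r hr hA c f, f2 => by simp [app, size_app f f2]; omega

/-- Derivation from a parse forest. -/
lemma derives_yield : ∀ {s : List (Symbol T g.NT)} (f : PF g s),
    g.Derives s (f.yieldPF.map Symbol.terminal)
  | _, nil => by simp [Derives.refl]
  | _, term t f => by
      simpa using Derives.append_left (derives_yield f) [Symbol.terminal t]
  | _, @node _ _ A r hr hA s c f => by
      have h1 : g.Produces (Symbol.nonterminal A :: s) (r.output ++ s) :=
        ⟨r, hr, by subst hA; exact ContextFreeRule.Rewrites.head s⟩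
      refine (Produces.single h1).trans ?_
      have h2 := Derives.append_right (derives_yield c) s
      have h3 := Derives.append_left (derives_yield f) (c.yieldPF.map Symbol.terminal)
      simpa using h2.trans h3

def termForest : ∀ (w : List T), PF g (w.map Symbol.terminal)
  | [] => nil
  | t :: w => term t (termForest w)

@[simp] lemma yield_termForest : ∀ (w : List T), (termForest (g := g) w).yieldPF = w
  | [] => rfl
  | t :: w => by simp [termForest, yield_termForest w]

/-- split a forest along an append of indices -/
lemma split : ∀ (x : List (Symbol T g.NT)) {y : List (Symbol T g.NT)} (f : PF g (x ++ y)),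
    ∃ (f1 : PF g x) (f2 : PF g y), f.yieldPF = f1.yieldPF ++ f2.yieldPF
  | [], _, f => ⟨nil, f, rfl⟩
  | Symbol.terminal t :: x, y, term _ f => by
      obtain ⟨f1, f2, h⟩ := split x f
      exact ⟨term t f1, f2, by simp [h]⟩
  | Symbol.nonterminal A :: x, y, node _ r hr hA c f => by
      obtain ⟨f1, f2, h⟩ := split x f
      exact ⟨node A r hr hA c f1, f2, by simp [h]⟩

lemma exists_cast {s s' : List (Symbol T g.NT)} (h : s = s') (f : PF g s) :
    ∃ f' : PF g s', f'.yieldPF = f.yieldPF ∧ f'.sizePF = f.sizePF := by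
  subst h; exact ⟨f, rfl, rfl⟩

lemma exists_pf {s : List (Symbol T g.NT)} {w : List T}
    (h : g.Derives s (w.map Symbol.terminal)) : ∃ f : PF g s, f.yieldPF = w := by
  induction h using Relation.ReflTransGen.head_induction_on with
  | refl => exact ⟨termForest w, yield_termForest w⟩
  | head hprod _ ih =>
      obtain ⟨f, hf⟩ := ih
      obtain ⟨r, hr, hrw⟩ := hprod
      obtain ⟨p, q, hs, ht⟩ := hrw.exists_parts
      subst hs ht
      obtain ⟨f', hy', _⟩ := exists_cast (List.append_assoc p r.output q) f
      obtain ⟨f1, frest, hsp⟩ := split p f'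
      obtain ⟨fc, fq, hsp2⟩ := split r.output frest
      obtain ⟨fans, hyans, _⟩ := exists_cast (List.append_assoc p [Symbol.nonterminal r.input] q).symm
        (app f1 (app (node r.input r hr rfl fc nil) fq))
      refine ⟨fans, ?_⟩
      rw [hyans]
      simp only [yield_app, yield_node, yield_nil, List.append_nil]
      rw [← hsp2, ← hsp, hy', hf]

end PF
end PumpCFG

namespace PumpCFG
open ContextFreeGrammar
variable {T : Type uT} {g : ContextFreeGrammar.{uT} T}

open Classical in
/-- relevant nonterminals -/
noncomputable def NTS (g : ContextFreeGrammar.{uT} T) : Finset g.NT :=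
  g.rules.image (·.input)

noncomputable def Kc (g : ContextFreeGrammar.{uT} T) : ℕ :=
  (g.rules.sup fun r => r.output.length) + 2

noncomputable def p0 (g : ContextFreeGrammar.{uT} T) : ℕ := Kc g ^ ((NTS g).card + 3)

lemma two_le_K : 2 ≤ Kc g := Nat.le_add_left 2 _

lemma out_le_K {r : ContextFreeRule T g.NT} (hr : r ∈ g.rules) : r.output.length ≤ Kc g :=
  le_trans (Finset.le_sup (f := fun r => r.output.length) hr) (Nat.le_add_right _ 2)

open PF

lemma yield_len : ∀ {s : List (Symbol T g.NT)} (f : PF g s),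
    f.yieldPF.length ≤ s.length * Kc g ^ f.hgt := by
  intro s f
  have hK : 0 < Kc g := lt_of_lt_of_le (by norm_num) (two_le_K (g := g))
  induction f with
  | nil => simp
  | term t f ih =>
      simp only [yield_term, List.length_cons, hgt_term]
      have h1 : Kc g ^ f.hgt ≤ Kc g ^ max 1 f.hgt :=
        Nat.pow_le_pow_right hK (le_max_right _ _)
      have h2 : 1 ≤ Kc g ^ max 1 f.hgt := Nat.one_le_pow _ _ hK
      rw [Nat.succ_mul]
      exact Nat.add_le_add (ih.trans (Nat.mul_le_mul_left _ h1)) h2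
  | node A ru hr hA c f ihc ihf =>
      simp only [yield_node, List.length_append, hgt_node, List.length_cons]
      have hc1 : c.yieldPF.length ≤ Kc g ^ (c.hgt + 1) := by
        calc c.yieldPF.length ≤ ru.output.length * Kc g ^ c.hgt := ihc
        _ ≤ Kc g * Kc g ^ c.hgt := Nat.mul_le_mul_right _ (out_le_K hr)
        _ = Kc g ^ (c.hgt + 1) := by ring
      have hc2 : c.yieldPF.length ≤ Kc g ^ max (c.hgt + 1) f.hgt :=
        hc1.trans (Nat.pow_le_pow_right hK (le_max_left _ _))
      have hf2 : f.yieldPF.length ≤ _ * Kc g ^ max (c.hgt + 1) f.hgt :=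
        ihf.trans (Nat.mul_le_mul_left _ (Nat.pow_le_pow_right hK (le_max_right _ _)))
      rw [Nat.succ_mul, Nat.add_comm (_ * _)]
      exact Nat.add_le_add hc2 hf2

lemma yield_len_tree {x : Symbol T g.NT} (f : PF g [x]) :
    f.yieldPF.length ≤ Kc g ^ f.hgt := by
  simpa using yield_len f

lemma root_mem {A : g.NT} (f : PF g [Symbol.nonterminal A]) : A ∈ NTS g := by
  match f with
  | PF.node A ru hr hA c fr =>
      classical
      exact Finset.mem_image.mpr ⟨ru, by simpa using hr, hA⟩

lemma forest_select : ∀ {s : List (Symbol T g.NT)} (c : PF g s), 2 ≤ c.hgt →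
    ∃ (B : g.NT) (l r : List T) (G : PF g [Symbol.nonterminal B] → PF g s)
      (f' : PF g [Symbol.nonterminal B]),
      f'.hgt = c.hgt ∧ f'.sizePF ≤ c.sizePF ∧
      c.yieldPF = l ++ f'.yieldPF ++ r ∧
      g.Derives s (l.map Symbol.terminal ++ [Symbol.nonterminal B] ++ r.map Symbol.terminal) ∧
      ∀ f'' : PF g [Symbol.nonterminal B],
        (G f'').yieldPF = l ++ f''.yieldPF ++ r ∧
        (G f'').sizePF + f'.sizePF = c.sizePF + f''.sizePF := by
  intro s c hc
  induction c with
  | nil => simp at hc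
  | term t f ih =>
      have hf : 2 ≤ f.hgt := by simp at hc; omega
      obtain ⟨B, l, r, G, f', h1, h2, h3, h4, h5⟩ := ih hf
      refine ⟨B, t :: l, r, fun f'' => PF.term t (G f''), f', ?_, ?_, ?_, ?_, ?_⟩
      · simp only [hgt_term]; omega
      · simp <;> omega
      · simp [h3]
      · simpa using Derives.append_left h4 [Symbol.terminal t]
      · intro f''; constructor
        · simp [(h5 f'').1]
        · have := (h5 f'').2; simp <;> omega
  | node A ru hr hA c f ihc ihf =>
      rename_i s'
      by_cases hcase : f.hgt ≤ c.hgt + 1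
      · refine ⟨A, [], f.yieldPF, fun f'' => PF.app f'' f, PF.node A ru hr hA c PF.nil,
          ?_, ?_, ?_, ?_, ?_⟩
        · simp only [hgt_node, hgt_nil]; omega
        · simp <;> omega
        · simp
        · simpa using Derives.append_left (derives_yield f) [Symbol.nonterminal A]
        · intro f''; constructor
          · simp
          · simp <;> omega
      · have hf : 2 ≤ f.hgt := by simp at hc ⊢; omega
        obtain ⟨B, l, r, G, f', h1, h2, h3, h4, h5⟩ := ihf hf
        refine ⟨B, c.yieldPF ++ l, r, fun f'' => PF.node A ru hr hA c (G f''), f',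
          ?_, ?_, ?_, ?_, ?_⟩
        · simp only [hgt_node]; omega
        · simp <;> omega
        · simp [h3]
        · have s1 : g.Produces (Symbol.nonterminal A :: s') (ru.output ++ s') :=
            ⟨ru, hr, by subst hA; exact ContextFreeRule.Rewrites.head s'⟩
          have s2 := Derives.append_right (derives_yield c) s'
          have s3 := Derives.append_left h4 (c.yieldPF.map Symbol.terminal)
          have := (Produces.single s1).trans (s2.trans s3)
          simpa using this
        · intro f''; constructor
          · simp [(h5 f'').1]
          · have := (h5 f'').2; simp <;> omega

lemma step_descend {A : g.NT} (f : PF g [Symbol.nonterminal A]) (h3 : 3 ≤ f.hgt) :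
    ∃ (B : g.NT) (l r : List T)
      (F : PF g [Symbol.nonterminal B] → PF g [Symbol.nonterminal A])
      (f' : PF g [Symbol.nonterminal B]),
      f'.hgt + 1 = f.hgt ∧ f'.sizePF < f.sizePF ∧
      f.yieldPF = l ++ f'.yieldPF ++ r ∧
      g.Derives [Symbol.nonterminal A]
        (l.map Symbol.terminal ++ [Symbol.nonterminal B] ++ r.map Symbol.terminal) ∧
      ∀ f'', (F f'').yieldPF = l ++ f''.yieldPF ++ r ∧
        (F f'').sizePF + f'.sizePF = f.sizePF + f''.sizePF := by
  match f with
  | PF.node A ru hr hA c fr =>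
      cases fr with
      | nil =>
        have hc : 2 ≤ c.hgt := by simp at h3; omega
        obtain ⟨B, l, r, G, f', h1, h2, hy, hd, hF⟩ := forest_select c hc
        refine ⟨B, l, r, fun f'' => PF.node A ru hr hA (G f'') PF.nil, f',
          ?_, ?_, ?_, ?_, ?_⟩
        · simp <;> omega
        · simp <;> omega
        · simp [hy]
        · have s1 : g.Produces [Symbol.nonterminal A] ru.output :=
            ⟨ru, hr, by subst hA; simpa using ContextFreeRule.Rewrites.head []⟩
          exact (Produces.single s1).trans hd
        · intro f''; constructor
          · simp [(hF f'').1]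
          · have := (hF f'').2; simp <;> omega

end PumpCFG

namespace PumpCFG
open ContextFreeGrammar PF
variable {T : Type uT} {g : ContextFreeGrammar.{uT} T}

lemma ctx_comp {A B C : g.NT} {l r U Z : List T}
    (h1 : g.Derives [Symbol.nonterminal A]
      (U.map Symbol.terminal ++ [Symbol.nonterminal B] ++ Z.map Symbol.terminal))
    (h2 : g.Derives [Symbol.nonterminal B]
      (l.map Symbol.terminal ++ [Symbol.nonterminal C] ++ r.map Symbol.terminal)) :
    g.Derives [Symbol.nonterminal A]
      ((U ++ l).map Symbol.terminal ++ [Symbol.nonterminal C] ++ ((r ++ Z)).map Symbol.terminal) := by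
  have h3 := Derives.append_left (Derives.append_right h2 (Z.map Symbol.terminal))
    (U.map Symbol.terminal)
  refine h1.trans ?_
  simp only [List.map_append, List.append_assoc] at h3 ⊢
  exact h3


lemma desc_to : ∀ (k : ℕ) {A : g.NT} (f : PF g [Symbol.nonterminal A]),
    f.hgt = k + ((NTS g).card + 3) →
    ∃ (B : g.NT) (U Z : List T)
      (F : PF g [Symbol.nonterminal B] → PF g [Symbol.nonterminal A])
      (f' : PF g [Symbol.nonterminal B]),
      f'.hgt = (NTS g).card + 3 ∧
      f.yieldPF = U ++ f'.yieldPF ++ Z ∧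
      g.Derives [Symbol.nonterminal A]
        (U.map Symbol.terminal ++ [Symbol.nonterminal B] ++ Z.map Symbol.terminal) ∧
      ∀ f'', (F f'').yieldPF = U ++ f''.yieldPF ++ Z ∧
        (F f'').sizePF + f'.sizePF = f.sizePF + f''.sizePF := by
  intro k
  induction k with
  | zero =>
      intro A f hf
      refine ⟨A, [], [], id, f, by omega, by simp, ?_, fun f'' => ⟨by simp, by simp only [id_eq]; omega⟩⟩
      simpa using Derives.refl (g := g) [Symbol.nonterminal A]
  | succ k ihk =>
      intro A f hf
      obtain ⟨B, l, r, F, f', h1, h2, h3, h4, h5⟩ := step_descend f (by omega)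
      obtain ⟨C, U', Z', F2, f'', e1, e3, e4, e5⟩ := ihk f' (by omega)
      refine ⟨C, l ++ U', Z' ++ r, fun ft => F (F2 ft), f'', e1, ?_, ?_, ?_⟩
      · rw [h3, e3]; simp [List.append_assoc]
      · exact ctx_comp h4 e4
      · intro ft
        constructor
        · rw [(h5 (F2 ft)).1, (e5 ft).1]; simp [List.append_assoc]
        · have q1 := (h5 (F2 ft)).2
          have q2 := (e5 ft).2
          beta_reduce
          omega

def Pumpable (g : ContextFreeGrammar.{uT} T) (A0 : g.NT) (w : List T) : Prop :=
  ∃ u v x y z : List T, w = u ++ v ++ x ++ y ++ z ∧ v ++ y ≠ [] ∧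
    (v ++ x ++ y).length ≤ p0 g ∧
    ∃ B : g.NT,
      g.Derives [Symbol.nonterminal A0]
        (u.map Symbol.terminal ++ [Symbol.nonterminal B] ++ z.map Symbol.terminal) ∧
      g.Derives [Symbol.nonterminal B]
        (v.map Symbol.terminal ++ [Symbol.nonterminal B] ++ y.map Symbol.terminal) ∧
      g.Derives [Symbol.nonterminal B] (x.map Symbol.terminal)

def LinkTop (g : ContextFreeGrammar.{uT} T) {A : g.NT} (C A0 : g.NT) (w0 : List T) (n0 : ℕ)
    (f : PF g [Symbol.nonterminal A]) : Prop :=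
  ∃ (fC : PF g [Symbol.nonterminal C]) (l r UC ZC : List T)
    (FC : PF g [Symbol.nonterminal C] → PF g [Symbol.nonterminal A0]),
    fC.hgt ≤ (NTS g).card + 3 ∧ f.sizePF < fC.sizePF ∧
    fC.yieldPF = l ++ f.yieldPF ++ r ∧
    w0 = UC ++ fC.yieldPF ++ ZC ∧
    g.Derives [Symbol.nonterminal C]
      (l.map Symbol.terminal ++ [Symbol.nonterminal A] ++ r.map Symbol.terminal) ∧
    g.Derives [Symbol.nonterminal A0]
      (UC.map Symbol.terminal ++ [Symbol.nonterminal C] ++ ZC.map Symbol.terminal) ∧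
    ∀ f'', (FC f'').yieldPF = UC ++ f''.yieldPF ++ ZC ∧
      (FC f'').sizePF + fC.sizePF = n0 + f''.sizePF

lemma search : ∀ (h : ℕ) {A : g.NT} (f : PF g [Symbol.nonterminal A]), f.hgt ≤ h →
    ∀ (V : Finset g.NT), V ⊆ NTS g → V.card + f.hgt = (NTS g).card + 3 → 2 ≤ f.hgt →
    ∀ (A0 : g.NT) (w0 : List T) (n0 : ℕ) (U Z : List T)
      (Fc : PF g [Symbol.nonterminal A] → PF g [Symbol.nonterminal A0]),
      w0 = U ++ f.yieldPF ++ Z →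
      g.Derives [Symbol.nonterminal A0]
        (U.map Symbol.terminal ++ [Symbol.nonterminal A] ++ Z.map Symbol.terminal) →
      (∀ f'', (Fc f'').yieldPF = U ++ f''.yieldPF ++ Z ∧
        (Fc f'').sizePF + f.sizePF = n0 + f''.sizePF) →
      (∀ C ∈ V, LinkTop g C A0 w0 n0 f) →
      Pumpable g A0 w0 ∨
        ∃ f0' : PF g [Symbol.nonterminal A0], f0'.yieldPF = w0 ∧ f0'.sizePF < n0 := by
  intro h
  induction h with
  | zero => intro A f hle _ _ _ h2; omega
  | succ h ih =>
    intro A f hle V hVsub hVcard h2 A0 w0 n0 U Z Fc hw0 htop hFc henv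
    classical
    by_cases hAV : A ∈ V
    · -- repeat found
      obtain ⟨fC, l, r, UC, ZC, FC, hhgt, hsize, hyC, hw0C, hder1, hder2, hFC⟩ := henv A hAV
      by_cases hlr : l = [] ∧ r = []
      · -- surgery: smaller tree
        obtain ⟨hl, hr⟩ := hlr
        refine Or.inr ⟨FC f, ?_, ?_⟩
        · rw [(hFC f).1, hw0C, hyC, hl, hr]; simp
        · have := (hFC f).2; omega
      · refine Or.inl ⟨UC, l, f.yieldPF, r, ZC, ?_, ?_, ?_, A, hder2, hder1, derives_yield f⟩
        · rw [hw0C, hyC]; simp [List.append_assoc]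
        · intro hcon
          rcases List.append_eq_nil_iff.mp hcon with ⟨h1', h2'⟩
          exact hlr ⟨h1', h2'⟩
        · have h1 := yield_len_tree fC
          have h2' : Kc g ^ fC.hgt ≤ p0 g := Nat.pow_le_pow_right
            (lt_of_lt_of_le (by norm_num) (two_le_K (g := g))).le hhgt
          calc (l ++ f.yieldPF ++ r).length = fC.yieldPF.length := by rw [hyC]
          _ ≤ _ := h1.trans h2'
    · -- descend
      have hAmem : A ∈ NTS g := root_mem f
      have h3 : 3 ≤ f.hgt := by
        rcases Nat.lt_or_ge f.hgt 3 with hlt | hge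
        · exfalso
          have : f.hgt = 2 := by omega
          have hcard : (insert A V).card = V.card + 1 := Finset.card_insert_of_notMem hAV
          have : (insert A V).card ≤ (NTS g).card :=
            Finset.card_le_card (Finset.insert_subset hAmem hVsub)
          omega
        · exact hge
      obtain ⟨B, l, r, F, f', hh1, hsz, hyf, hderstep, hF⟩ := step_descend f h3
      refine ih f' (by omega) (insert A V) (Finset.insert_subset hAmem hVsub)
        (by rw [Finset.card_insert_of_notMem hAV]; omega) (by omega)
        A0 w0 n0 (U ++ l) (r ++ Z) (fun f'' => Fc (F f'')) ?_ ?_ ?_ ?_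
      · rw [hw0, hyf]; simp [List.append_assoc]
      · exact ctx_comp htop hderstep
      · intro f''
        constructor
        · rw [(hFc (F f'')).1, (hF f'').1]; simp [List.append_assoc]
        · have e1 := (hFc (F f'')).2
          have e2 := (hF f'').2
          beta_reduce
          omega
      · intro C hC
        rcases Finset.mem_insert.mp hC with rfl | hCV
        · exact ⟨f, l, r, U, Z, Fc, by omega, hsz, hyf, hw0, hderstep, htop, hFc⟩
        · obtain ⟨fC, lC, rC, UC, ZC, FC, c1, c2, c3, c4, c5, c6, c7⟩ := henv C hCV
          refine ⟨fC, lC ++ l, r ++ rC, UC, ZC, FC, c1, by omega, ?_, c4, ?_, c6, c7⟩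
          · rw [c3, hyf]; simp [List.append_assoc]
          · exact ctx_comp c5 hderstep

lemma main_pump : ∀ (N : ℕ) {A0 : g.NT} (f0 : PF g [Symbol.nonterminal A0]),
    f0.sizePF ≤ N → p0 g < f0.yieldPF.length → Pumpable g A0 f0.yieldPF := by
  intro N
  induction N using Nat.strong_induction_on with
  | _ N ihN =>
    intro A0 f0 hsz hlen
    have hK2 : 2 ≤ Kc g := two_le_K
    have hhgt : (NTS g).card + 3 < f0.hgt := by
      have h1 := yield_len_tree f0
      have h2 : Kc g ^ ((NTS g).card + 3) < Kc g ^ f0.hgt := lt_of_lt_of_le (by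
        exact lt_of_lt_of_le hlen h1) (le_refl _)
      exact (Nat.pow_lt_pow_iff_right (by omega)).mp h2
    obtain ⟨k, hk⟩ : ∃ k, f0.hgt = k + ((NTS g).card + 3) := ⟨f0.hgt - ((NTS g).card + 3), by omega⟩
    obtain ⟨B, U, Z, F, f', d1, d3, d4, d5⟩ := desc_to k f0 hk
    have hsearch := search f'.hgt f' (le_refl _) ∅ (Finset.empty_subset _)
      (by rw [d1]; simp) (by omega) A0 f0.yieldPF f0.sizePF U Z F d3 d4 d5
      (by intro C hC; simp at hC)
    rcases hsearch with hp | ⟨f0', hy0, hsz0⟩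
    · exact hp
    · have := ihN f0'.sizePF (by omega) f0' (le_refl _) (by rw [hy0]; exact hlen)
      rwa [hy0] at this

end PumpCFG

namespace PumpCFG
open ContextFreeGrammar PF
variable {T : Type uT} {g : ContextFreeGrammar.{uT} T}

lemma one_le_p0 : 1 ≤ p0 g :=
  Nat.one_le_pow _ _ (lt_of_lt_of_le (by norm_num) (two_le_K (g := g)))

/-- The (weak, k = 0) pumping lemma for context-free languages. -/
theorem cfg_pump (g : ContextFreeGrammar.{uT} T) :
    ∃ p : ℕ, 1 ≤ p ∧ ∀ w ∈ g.language, p < w.length →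
      ∃ u v x y z : List T, w = u ++ v ++ x ++ y ++ z ∧ v ++ y ≠ [] ∧
        (v ++ x ++ y).length ≤ p ∧ (u ++ x ++ z) ∈ g.language := by
  refine ⟨p0 g, one_le_p0, fun w hw hlen => ?_⟩
  rw [mem_language_iff] at hw
  obtain ⟨f0, hf0⟩ := exists_pf hw
  have hp := main_pump f0.sizePF f0 (le_refl _) (by rw [hf0]; exact hlen)
  rw [hf0] at hp
  obtain ⟨u, v, x, y, z, hsplit, hvy, hlen2, B, hd1, hd2, hd3⟩ := hp
  refine ⟨u, v, x, y, z, hsplit, hvy, hlen2, ?_⟩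
  rw [mem_language_iff]
  have h4 := Derives.append_left (Derives.append_right hd3 (z.map Symbol.terminal))
    (u.map Symbol.terminal)
  refine hd1.trans ?_
  simp only [List.map_append, List.append_assoc] at h4 ⊢
  exact h4

end PumpCFG

instance : DecidableEq AB := fun x y => by
  cases x <;> cases y <;> first | exact isTrue rfl | exact isFalse (fun h => AB.noConfusion h)

namespace ABWork

abbrev ra (n : ℕ) : List AB := List.replicate n AB.a
abbrev rb (n : ℕ) : List AB := List.replicate n AB.b
abbrev rw4 (A B C D : ℕ) : List AB := ra A ++ rb B ++ ra C ++ rb D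

lemma ab_ne : AB.a ≠ AB.b := fun h => AB.noConfusion h

/-- run-length prefix uniqueness -/
lemma rep_eq {α : Type*} {a b : α} (hab : a ≠ b) :
    ∀ (A : ℕ) {A' : ℕ} {t t' : List α},
      List.replicate A a ++ b :: t = List.replicate A' a ++ b :: t' → A = A' ∧ t = t' := by
  intro A
  induction A with
  | zero =>
      intro A' t t' h
      cases A' with
      | zero => simpa using h
      | succ A' =>
          exfalso
          rw [List.replicate_succ] at h
          simp at h
          exact hab h.1.symm
  | succ A ih =>
      intro A' t t' h
      cases A' with
      | zero =>
          exfalso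
          rw [List.replicate_succ] at h
          simp at h
          exact hab h.1
      | succ A' =>
          rw [List.replicate_succ, List.replicate_succ] at h
          simp only [List.cons_append, List.cons.injEq] at h
          obtain ⟨hA, ht⟩ := ih h.2
          exact ⟨by omega, ht⟩

@[simp] lemma count_ra_a (n : ℕ) : (ra n).count AB.a = n := by simp
@[simp] lemma count_ra_b (n : ℕ) : (ra n).count AB.b = 0 := by
  simp [List.count_replicate]
@[simp] lemma count_rb_b (n : ℕ) : (rb n).count AB.b = n := by simp
@[simp] lemma count_rb_a (n : ℕ) : (rb n).count AB.a = 0 := by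
  simp [List.count_replicate]

lemma count_rw4_a (A B C D : ℕ) : (rw4 A B C D).count AB.a = A + C := by
  simp [List.count_append]
lemma count_rw4_b (A B C D : ℕ) : (rw4 A B C D).count AB.b = B + D := by
  simp [List.count_append]

lemma rw4_expand (A B1 C D : ℕ) :
    rw4 A (B1 + 1) C D = ra A ++ AB.b :: (rb B1 ++ ra C ++ rb D) := by
  simp [rw4, List.replicate_succ, List.append_assoc]

lemma uniq4 {A B C D A' B' C' D' : ℕ} (hB : 1 ≤ B) (hC : 1 ≤ C) (hB' : 1 ≤ B') (hC' : 1 ≤ C')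
    (h : rw4 A B C D = rw4 A' B' C' D') : A = A' ∧ B = B' ∧ C = C' ∧ D = D' := by
  obtain ⟨B1, rfl⟩ : ∃ B1, B = B1 + 1 := ⟨B - 1, by omega⟩
  obtain ⟨B1', rfl⟩ : ∃ B1', B' = B1' + 1 := ⟨B' - 1, by omega⟩
  obtain ⟨C1, rfl⟩ : ∃ C1, C = C1 + 1 := ⟨C - 1, by omega⟩
  obtain ⟨C1', rfl⟩ : ∃ C1', C' = C1' + 1 := ⟨C' - 1, by omega⟩
  have hcount_a := congrArg (List.count AB.a) h
  have hcount_b := congrArg (List.count AB.b) h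
  rw [count_rw4_a, count_rw4_a] at hcount_a
  rw [count_rw4_b, count_rw4_b] at hcount_b
  rw [rw4_expand, rw4_expand] at h
  obtain ⟨hA, h2⟩ := rep_eq ab_ne A h
  have h2' : rb B1 ++ AB.a :: (ra C1 ++ rb D) = rb B1' ++ AB.a :: (ra C1' ++ rb D') := by
    have e1 : rb B1 ++ ra (C1 + 1) ++ rb D = rb B1 ++ AB.a :: (ra C1 ++ rb D) := by
      simp [List.replicate_succ, List.append_assoc]
    have e2 : rb B1' ++ ra (C1' + 1) ++ rb D' = rb B1' ++ AB.a :: (ra C1' ++ rb D') := by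
      simp [List.replicate_succ, List.append_assoc]
    rw [← e1, ← e2]
    simpa [List.append_assoc] using h2
  obtain ⟨hB1, _⟩ := rep_eq (Ne.symm ab_ne) B1 h2'
  omega

lemma no_L_two_blocks {X Y m n : ℕ} (hm : 1 ≤ m) (hn : 1 ≤ n) :
    ra X ++ rb Y ≠ rw4 m (n + 1) (m + 1) n := by
  intro h
  cases Y with
  | zero =>
      have := congrArg (List.count AB.b) h
      rw [count_rw4_b] at this
      simp at this
      try omega
  | succ Y1 =>
      rw [rw4_expand] at h
      have h' : ra X ++ AB.b :: rb Y1 = ra m ++ AB.b :: (rb n ++ ra (m + 1) ++ rb n) := by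
        simpa [List.replicate_succ] using h
      obtain ⟨_, ht⟩ := rep_eq ab_ne X h'
      have := congrArg (List.count AB.a) ht
      simp [List.count_append] at this
      try omega

lemma no_L_end_a {X Y C m n : ℕ} (hm : 1 ≤ m) (hn : 1 ≤ n) (hC : 1 ≤ C) :
    ra X ++ rb (Y + 1) ++ ra C ≠ rw4 m (n + 1) (m + 1) n := by
  intro h
  have h' : ra X ++ AB.b :: (rb Y ++ ra C) = ra m ++ AB.b :: (rb n ++ ra (m + 1) ++ rb n) := by
    rw [rw4_expand] at h
    simpa [List.replicate_succ, List.append_assoc] using h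
  obtain ⟨hX, ht⟩ := rep_eq ab_ne X h'
  obtain ⟨C1, rfl⟩ : ∃ C1, C = C1 + 1 := ⟨C - 1, by omega⟩
  have ht' : rb Y ++ AB.a :: ra C1 = rb n ++ AB.a :: (ra m ++ rb n) := by
    have e1 : ra (C1 + 1) = AB.a :: ra C1 := by simp [List.replicate_succ]
    have e2 : ra (m + 1) = AB.a :: ra m := by simp [List.replicate_succ]
    rw [e1] at ht
    rw [e2] at ht
    simpa [List.append_assoc] using ht
  obtain ⟨_, ht2⟩ := rep_eq (Ne.symm ab_ne) Y ht'
  have := congrArg (List.count AB.b) ht2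
  simp [List.count_append] at this
  try omega

end ABWork

namespace ABWork
open List

lemma append_split {α : Type*} {l1 l2 m1 m2 : List α} (h : l1 ++ l2 = m1 ++ m2)
    (hl : l1.length ≤ m1.length) : ∃ k, m1 = l1 ++ k ∧ l2 = k ++ m2 := by
  rcases List.append_eq_append_iff.mp h with ⟨k, hk1, hk2⟩ | ⟨k, hk1, hk2⟩
  · exact ⟨k, hk1, hk2⟩
  · have hk : k = [] := by
      have := congrArg List.length hk1
      simp at this
      have : k.length = 0 := by omega
      exact List.eq_nil_of_length_eq_zero this
  -- fallthrough
    subst hk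
    simp at hk1 hk2
    exact ⟨[], by simp [hk1], by simp [hk2]⟩

lemma sublist_two_blocks {w' : List AB} {c1 c2 : AB} {n1 n2 : ℕ}
    (h : w' <+ List.replicate n1 c1 ++ List.replicate n2 c2) :
    ∃ A B, A ≤ n1 ∧ B ≤ n2 ∧ w' = List.replicate A c1 ++ List.replicate B c2 := by
  rw [List.sublist_append_iff] at h
  obtain ⟨x1, x2, rfl, h1, h2⟩ := h
  rw [List.sublist_replicate_iff] at h1 h2
  obtain ⟨A, hA, rfl⟩ := h1
  obtain ⟨B, hB, rfl⟩ := h2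
  exact ⟨A, B, hA, hB, rfl⟩

lemma merge_mid_a (A C D : ℕ) : rw4 A 0 C D = ra (A + C) ++ rb D := by
  show _ = List.replicate (A + C) AB.a ++ rb D
  rw [List.replicate_add]
  simp [rw4, List.append_assoc]

lemma merge_mid_b (A B D : ℕ) : rw4 A B 0 D = ra A ++ rb (B + D) := by
  show _ = ra A ++ List.replicate (B + D) AB.b
  rw [List.replicate_add]
  simp [rw4, List.append_assoc]

lemma key {p : ℕ} (hp : 1 ≤ p) {u v x y z : List AB}
    (hw : rw4 p (p+1) (p+1) p = u ++ v ++ x ++ y ++ z)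
    (hvy : v ++ y ≠ []) (hlen : (v ++ x ++ y).length ≤ p) :
    (∃ A B C D, u ++ x ++ z = rw4 A B C D) ∧
      ¬ ∃ m n, 1 ≤ m ∧ 1 ≤ n ∧ u ++ x ++ z = rw4 m (n+1) (m+1) n := by
  have hvy' : 1 ≤ v.length + y.length := by
    have h0 : 0 < (v ++ y).length := List.length_pos_iff.mpr hvy
    simp at h0
    omega
  have hx : x <+ v ++ x ++ y :=
    (List.sublist_append_right v x).trans (List.sublist_append_left (v ++ x) y)
  have hs : (v ++ x ++ y).length = v.length + x.length + y.length := by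
    simp
    try omega
  by_cases hc1 : u.length + (v ++ x ++ y).length ≤ 2*p+1
  · -- deletions inside blocks 1-2
    have hgrp : (u ++ (v ++ x ++ y)) ++ z = (ra p ++ rb (p+1)) ++ (ra (p+1) ++ rb p) := by
      have e1 : (u ++ (v ++ x ++ y)) ++ z = u ++ v ++ x ++ y ++ z := by
        simp [List.append_assoc]
      have e2 : (ra p ++ rb (p+1)) ++ (ra (p+1) ++ rb p) = rw4 p (p+1) (p+1) p := by
        simp [rw4, List.append_assoc]
      rw [e1, e2, hw]
    obtain ⟨k, hk1, hk2⟩ := append_split hgrp (by simp; omega)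
    have hsub : u ++ (x ++ k) <+ ra p ++ rb (p+1) := by
      rw [hk1]
      have e : (u ++ (v ++ x ++ y)) ++ k = u ++ ((v ++ x ++ y) ++ k) := by
        simp [List.append_assoc]
      rw [e]
      exact (List.Sublist.refl u).append (hx.append (List.Sublist.refl k))
    obtain ⟨A, B, hA, hB, hAB⟩ := sublist_two_blocks hsub
    have hlen1 : A + B + (v.length + y.length) = 2*p+1 := by
      have e1 := congrArg List.length hk1
      have e2 := congrArg List.length hAB
      simp at e1 e2
      omega
    have huxz : u ++ x ++ z = rw4 A B (p+1) p := by
      have e : u ++ x ++ z = (u ++ (x ++ k)) ++ (ra (p+1) ++ rb p) := by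
        rw [hk2]; simp [List.append_assoc]
      rw [e, hAB]
      simp [rw4, List.append_assoc]
    refine ⟨⟨A, B, p+1, p, huxz⟩, ?_⟩
    rintro ⟨m, n, hm, hn, heq⟩
    rw [huxz] at heq
    cases B with
    | zero =>
        rw [merge_mid_a] at heq
        exact no_L_two_blocks hm hn heq
    | succ B1 =>
        obtain ⟨e1, e2, e3, e4⟩ := uniq4 (by omega) (by omega) (by omega) (by omega) heq
        omega
  · by_cases hc2 : u.length ≤ 2*p+1
    · -- deletions inside blocks 2-3
      have hgrp : ra p ++ (rb (p+1) ++ ra (p+1) ++ rb p) = u ++ ((v ++ x ++ y) ++ z) := by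
        have e1 : ra p ++ (rb (p+1) ++ ra (p+1) ++ rb p) = rw4 p (p+1) (p+1) p := by
          simp [rw4, List.append_assoc]
        have e2 : u ++ ((v ++ x ++ y) ++ z) = u ++ v ++ x ++ y ++ z := by
          simp [List.append_assoc]
        rw [e1, e2, hw]
      obtain ⟨u2, hu2, hrest⟩ := append_split hgrp (by simp; omega)
      have hu2len : u2.length + p = u.length := by
        have e := congrArg List.length hu2; simp at e; omega
      have hgrp2 : (u2 ++ (v ++ x ++ y)) ++ z = (rb (p+1) ++ ra (p+1)) ++ rb p := by
        have e1 : (u2 ++ (v ++ x ++ y)) ++ z = u2 ++ ((v ++ x ++ y) ++ z) := by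
          simp [List.append_assoc]
        have e2 : (rb (p+1) ++ ra (p+1)) ++ rb p = rb (p+1) ++ ra (p+1) ++ rb p := rfl
        rw [e1, e2, ← hrest]
      obtain ⟨k, hk1, hk2⟩ := append_split hgrp2 (by simp; omega)
      have hsub : u2 ++ (x ++ k) <+ rb (p+1) ++ ra (p+1) := by
        rw [hk1]
        have e : (u2 ++ (v ++ x ++ y)) ++ k = u2 ++ ((v ++ x ++ y) ++ k) := by
          simp [List.append_assoc]
        rw [e]
        exact (List.Sublist.refl u2).append (hx.append (List.Sublist.refl k))
      obtain ⟨B, C, hB, hC, hBC⟩ := sublist_two_blocks hsub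
      have hlen1 : B + C + (v.length + y.length) = 2*p+2 := by
        have e1 := congrArg List.length hk1
        have e2 := congrArg List.length hBC
        simp at e1 e2
        omega
      have huxz : u ++ x ++ z = rw4 p B C p := by
        have e : u ++ x ++ z = ra p ++ ((u2 ++ (x ++ k)) ++ rb p) := by
          rw [hk2, hu2]; simp [List.append_assoc]
        rw [e, hBC]
        simp [rw4, List.append_assoc]
      refine ⟨⟨p, B, C, p, huxz⟩, ?_⟩
      rintro ⟨m, n, hm, hn, heq⟩
      rw [huxz] at heq
      cases B with
      | zero =>
          rw [merge_mid_a] at heq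
          exact no_L_two_blocks hm hn heq
      | succ B1 =>
          cases C with
          | zero =>
              rw [merge_mid_b] at heq
              exact no_L_two_blocks hm hn heq
          | succ C1 =>
              obtain ⟨e1, e2, e3, e4⟩ := uniq4 (by omega) (by omega) (by omega) (by omega) heq
              omega
    · -- deletions inside blocks 3-4
      have hgrp : (ra p ++ rb (p+1)) ++ (ra (p+1) ++ rb p) = u ++ ((v ++ x ++ y) ++ z) := by
        have e1 : (ra p ++ rb (p+1)) ++ (ra (p+1) ++ rb p) = rw4 p (p+1) (p+1) p := by
          simp [rw4, List.append_assoc]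
        have e2 : u ++ ((v ++ x ++ y) ++ z) = u ++ v ++ x ++ y ++ z := by
          simp [List.append_assoc]
        rw [e1, e2, hw]
      obtain ⟨u2, hu2, hrest⟩ := append_split hgrp (by simp; omega)
      have hsub : u2 ++ (x ++ z) <+ ra (p+1) ++ rb p := by
        rw [hrest]
        exact (List.Sublist.refl u2).append (hx.append (List.Sublist.refl z))
      obtain ⟨C, D, hC, hD, hCD⟩ := sublist_two_blocks hsub
      have hlen1 : C + D + (v.length + y.length) = 2*p+1 := by
        have e1 := congrArg List.length hrest
        have e2 := congrArg List.length hCD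
        simp at e1 e2
        omega
      have huxz : u ++ x ++ z = rw4 p (p+1) C D := by
        have e : u ++ x ++ z = (ra p ++ rb (p+1)) ++ (u2 ++ (x ++ z)) := by
          rw [hu2]; simp [List.append_assoc]
        rw [e, hCD]
        simp [rw4, List.append_assoc]
      refine ⟨⟨p, p+1, C, D, huxz⟩, ?_⟩
      rintro ⟨m, n, hm, hn, heq⟩
      rw [huxz] at heq
      cases C with
      | zero =>
          rw [merge_mid_b] at heq
          exact no_L_two_blocks hm hn heq
      | succ C1 =>
          cases D with
          | zero =>
              have heq' : ra p ++ rb (p+1) ++ ra (C1+1) = rw4 m (n+1) (m+1) n := by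
                rw [← heq]
                simp [rw4, List.append_assoc]
              exact no_L_end_a (X := p) (Y := p) (C := C1+1) hm hn (by omega) heq'
          | succ D1 =>
              obtain ⟨e1, e2, e3, e4⟩ := uniq4 (by omega) (by omega) (by omega) (by omega) heq
              omega

end ABWork

namespace ABWork

lemma shuffle_mask {α : Type*} {u v w : List α} (h : Shuffle u v w) :
    ∃ l : List (α × Bool), w = l.map Prod.fst ∧
      u = (l.filter (fun q => q.2)).map Prod.fst ∧
      v = (l.filter (fun q => !q.2)).map Prod.fst := by
  induction h with
  | nil => exact ⟨[], rfl, rfl, rfl⟩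
  | @left a u v w _ ih =>
      obtain ⟨l, h1, h2, h3⟩ := ih
      exact ⟨(a, true) :: l, by simp [h1], by simp [h2], by simp [h3]⟩
  | @right a u v w _ ih =>
      obtain ⟨l, h1, h2, h3⟩ := ih
      exact ⟨(a, false) :: l, by simp [h1], by simp [h2], by simp [h3]⟩

lemma mask_split (c : AB) : ∀ (li : List (AB × Bool)) (k : ℕ),
    li.map Prod.fst = List.replicate k c →
    ∃ j1 j2, j1 + j2 = k ∧ (li.filter (fun q => q.2)).map Prod.fst = List.replicate j1 c ∧
      (li.filter (fun q => !q.2)).map Prod.fst = List.replicate j2 c := by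
  intro li
  induction li with
  | nil =>
      intro k hk
      have hk0 : k = 0 := by
        have := congrArg List.length hk
        simp at this
        omega
      subst hk0
      exact ⟨0, 0, by omega, by simp, by simp⟩
  | cons q t ih =>
      intro k hk
      obtain ⟨k', rfl⟩ : ∃ k', k = k' + 1 := by
        cases k with
        | zero => simp at hk
        | succ k' => exact ⟨k', rfl⟩
      rw [List.replicate_succ] at hk
      simp only [List.map_cons, List.cons.injEq] at hk
      obtain ⟨hq1, hq2⟩ := hk
      obtain ⟨j1, j2, hsum, h1, h2⟩ := ih k' hq2
      rcases q with ⟨qc, b⟩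
      simp at hq1
      subst hq1
      cases b with
      | true =>
          refine ⟨j1 + 1, j2, by omega, ?_, ?_⟩
          · simp [List.replicate_succ, h1]
          · simpa using h2
      | false =>
          refine ⟨j1, j2 + 1, by omega, ?_, ?_⟩
          · simpa using h1
          · simp [List.replicate_succ, h2]

lemma replicate_inj {c : AB} {n m : ℕ} (h : List.replicate n c = List.replicate m c) : n = m := by
  have := congrArg List.length h
  simpa using this

lemma u_form_eq {A1 B1 C1 D1 n : ℕ} (hn : 1 ≤ n)
    (h : rw4 A1 B1 C1 D1 = ra n ++ [AB.b] ++ ra n) :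
    A1 = n ∧ B1 = 1 ∧ C1 = n ∧ D1 = 0 := by
  have hrhs : ra n ++ [AB.b] ++ ra n = rw4 n 1 n 0 := by
    simp [rw4, List.append_assoc]
  rw [hrhs] at h
  have hcb := congrArg (List.count AB.b) h
  rw [count_rw4_b, count_rw4_b] at hcb
  have hchoice : (B1 = 1 ∧ D1 = 0) ∨ (B1 = 0 ∧ D1 = 1) := by omega
  rcases hchoice with ⟨hB1, hD1⟩ | ⟨hB1, hD1⟩
  · subst hB1 hD1
    cases C1 with
    | zero =>
        exfalso
        have e1 : rw4 A1 1 0 0 = ra A1 ++ AB.b :: ([] : List AB) := by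
          simp [rw4, List.replicate_succ]
        have e2 : rw4 n 1 n 0 = ra n ++ AB.b :: ra n := by
          simp [rw4, List.replicate_succ, List.append_assoc]
        rw [e1, e2] at h
        obtain ⟨_, hnil⟩ := rep_eq ab_ne A1 h
        have := congrArg List.length hnil
        simp at this
        omega
    | succ C0 =>
        obtain ⟨e1, e2, e3, e4⟩ := uniq4 (by omega) (by omega) (by omega) hn h
        omega
  · exfalso
    subst hB1 hD1
    have e1 : rw4 A1 0 C1 1 = ra (A1 + C1) ++ AB.b :: ([] : List AB) := by
      rw [merge_mid_a]
      simp [List.replicate_succ]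
    have e2 : rw4 n 1 n 0 = ra n ++ AB.b :: ra n := by
      simp [rw4, List.replicate_succ, List.append_assoc]
    rw [e1, e2] at h
    obtain ⟨_, hnil⟩ := rep_eq ab_ne (A1 + C1) h
    have := congrArg List.length hnil
    simp at this
    omega

lemma v_form_eq {A2 B2 C2 D2 m : ℕ} (hm : 1 ≤ m)
    (h : rw4 A2 B2 C2 D2 = rb m ++ [AB.a] ++ rb m) :
    A2 = 0 ∧ B2 = m ∧ C2 = 1 ∧ D2 = m := by
  have hca := congrArg (List.count AB.a) h
  rw [count_rw4_a] at hca
  simp [List.count_append] at hca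
  have hchoice : (A2 = 0 ∧ C2 = 1) ∨ (A2 = 1 ∧ C2 = 0) := by omega
  rcases hchoice with ⟨hA2, hC2⟩ | ⟨hA2, hC2⟩
  · subst hA2 hC2
    have e1' : rw4 0 B2 1 D2 = rb B2 ++ AB.a :: rb D2 := by
      simp [rw4, List.replicate_succ, List.append_assoc]
    have e2' : rb m ++ [AB.a] ++ rb m = rb m ++ AB.a :: rb m := by
      simp [List.append_assoc]
    rw [e1', e2'] at h
    obtain ⟨e1, e2⟩ := rep_eq (Ne.symm ab_ne) B2 h
    exact ⟨rfl, e1, rfl, replicate_inj e2⟩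
  · exfalso
    subst hA2 hC2
    obtain ⟨m0, rfl⟩ : ∃ m0, m = m0 + 1 := ⟨m - 1, by omega⟩
    have := congrArg List.head? h
    simp [rw4, List.replicate_succ] at this

theorem shuffle_char {u v w0 : List AB} (hsh : Shuffle u v w0)
    {n m : ℕ} (hn : 1 ≤ n) (hm : 1 ≤ m)
    (hu : u = ra n ++ [AB.b] ++ ra n) (hv : v = rb m ++ [AB.a] ++ rb m)
    {A B C D : ℕ} (hw : w0 = rw4 A B C D) :
    A = n ∧ B = m + 1 ∧ C = n + 1 ∧ D = m := by
  obtain ⟨l, hl, hlu, hlv⟩ := shuffle_mask hsh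
  rw [hw] at hl
  have hl' : List.map Prod.fst l = ra A ++ rb B ++ ra C ++ rb D := hl.symm
  rw [List.map_eq_append_iff] at hl'
  obtain ⟨l123, l4, rfl, h123, h4⟩ := hl'
  rw [List.map_eq_append_iff] at h123
  obtain ⟨l12, l3, rfl, h12, h3⟩ := h123
  rw [List.map_eq_append_iff] at h12
  obtain ⟨l1, l2, rfl, h1, h2⟩ := h12
  obtain ⟨A1, A2, hAsum, hA1, hA2⟩ := mask_split AB.a l1 A h1
  obtain ⟨B1, B2, hBsum, hB1, hB2⟩ := mask_split AB.b l2 B h2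
  obtain ⟨C1, C2, hCsum, hC1, hC2⟩ := mask_split AB.a l3 C h3
  obtain ⟨D1, D2, hDsum, hD1, hD2⟩ := mask_split AB.b l4 D h4
  simp only [List.filter_append, List.map_append] at hlu hlv
  rw [hA1, hB1, hC1, hD1] at hlu
  rw [hA2, hB2, hC2, hD2] at hlv
  have hueq : rw4 A1 B1 C1 D1 = ra n ++ [AB.b] ++ ra n := by
    rw [← hu]; exact hlu.symm
  have hveq : rw4 A2 B2 C2 D2 = rb m ++ [AB.a] ++ rb m := by
    rw [← hv]; exact hlv.symm
  obtain ⟨f1, f2, f3, f4⟩ := u_form_eq hn hueq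
  obtain ⟨g1, g2, g3, g4⟩ := v_form_eq hm hveq
  omega

end ABWork

namespace ABWork

lemma shuffle_prepend_left {α : Type*} (t : List α) {u v w : List α} (h : Shuffle u v w) :
    Shuffle (t ++ u) v (t ++ w) := by
  induction t with
  | nil => exact h
  | cons c t ih => exact Shuffle.left ih

lemma shuffle_prepend_right {α : Type*} (t : List α) {u v w : List α} (h : Shuffle u v w) :
    Shuffle u (t ++ v) (t ++ w) := by
  induction t with
  | nil => exact h
  | cons c t ih => exact Shuffle.right ih

lemma rep_shift {α : Type*} (c : α) (n : ℕ) (l : List α) :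
    List.replicate n c ++ c :: l = c :: (List.replicate n c ++ l) := by
  induction n with
  | zero => simp
  | succ n ih => simp [List.replicate_succ, ih]

lemma shuffle_word (p : ℕ) :
    Shuffle (ra p ++ [AB.b] ++ ra p) (rb p ++ [AB.a] ++ rb p) (rw4 p (p+1) (p+1) p) := by
  have t1 : Shuffle ([] : List AB) (rb p) (rb p) := by
    simpa using shuffle_prepend_right (rb p) Shuffle.nil
  have t2 : Shuffle ([] : List AB) (AB.a :: rb p) (AB.a :: rb p) := Shuffle.right t1
  have t3 : Shuffle (ra p) (AB.a :: rb p) (ra p ++ AB.a :: rb p) := by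
    simpa using shuffle_prepend_left (ra p) t2
  have t4 : Shuffle (ra p) (rb p ++ AB.a :: rb p) (rb p ++ (ra p ++ AB.a :: rb p)) :=
    shuffle_prepend_right (rb p) t3
  have t5 : Shuffle (AB.b :: ra p) (rb p ++ AB.a :: rb p)
      (AB.b :: (rb p ++ (ra p ++ AB.a :: rb p))) := Shuffle.left t4
  have t6 : Shuffle (ra p ++ (AB.b :: ra p)) (rb p ++ AB.a :: rb p)
      (ra p ++ (AB.b :: (rb p ++ (ra p ++ AB.a :: rb p)))) := shuffle_prepend_left (ra p) t5
  have e1 : ra p ++ [AB.b] ++ ra p = ra p ++ (AB.b :: ra p) := by simp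
  have e2 : rb p ++ [AB.a] ++ rb p = rb p ++ AB.a :: rb p := by simp
  have e3 : rw4 p (p+1) (p+1) p = ra p ++ (AB.b :: (rb p ++ (ra p ++ AB.a :: rb p))) := by
    simp [rw4, List.replicate_succ, rep_shift, List.append_assoc]
  rw [e1, e2, e3]
  exact t6

end ABWork


/-- {a^m b^(n+1) a^(m+1) b^n : m, n ≥ 1} is not context-free; consequently the shuffle of
{a^n b a^n : n ≥ 1} and {b^n a b^n : n ≥ 1} is not context-free. -/
theorem stmt_5 :
    ¬ Language.IsContextFree
      ({w | ∃ m n : ℕ, 1 ≤ m ∧ 1 ≤ n ∧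
          w = List.replicate m AB.a ++ List.replicate (n + 1) AB.b ++
              List.replicate (m + 1) AB.a ++ List.replicate n AB.b} : Language AB) ∧
    ¬ Language.IsContextFree
      (LShuffle
        ({w | ∃ n : ℕ, 1 ≤ n ∧
            w = List.replicate n AB.a ++ [AB.b] ++ List.replicate n AB.a} : Language AB)
        ({w | ∃ n : ℕ, 1 ≤ n ∧
            w = List.replicate n AB.b ++ [AB.a] ++ List.replicate n AB.b} : Language AB)) := by
  constructor
  · rintro ⟨g, hg⟩
    obtain ⟨p, hp1, hpump⟩ := PumpCFG.cfg_pump g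
    have hwL : ABWork.rw4 p (p+1) (p+1) p ∈ g.language := by
      rw [hg]
      exact ⟨p, p, hp1, hp1, rfl⟩
    have hlen : p < (ABWork.rw4 p (p+1) (p+1) p).length := by
      simp [ABWork.rw4]
    obtain ⟨u, v, x, y, z, hsplit, hvy, hlen2, hmem⟩ := hpump _ hwL hlen
    obtain ⟨_, hnot⟩ := ABWork.key hp1 hsplit hvy hlen2
    rw [hg] at hmem
    obtain ⟨m, n, hm, hn, heq⟩ := hmem
    exact hnot ⟨m, n, hm, hn, heq⟩
  · rintro ⟨g, hg⟩
    obtain ⟨p, hp1, hpump⟩ := PumpCFG.cfg_pump g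
    have hwL : ABWork.rw4 p (p+1) (p+1) p ∈ g.language := by
      rw [hg]
      exact ⟨ABWork.ra p ++ [AB.b] ++ ABWork.ra p, ⟨p, hp1, rfl⟩,
        ABWork.rb p ++ [AB.a] ++ ABWork.rb p, ⟨p, hp1, rfl⟩, ABWork.shuffle_word p⟩
    have hlen : p < (ABWork.rw4 p (p+1) (p+1) p).length := by
      simp [ABWork.rw4]
    obtain ⟨u, v, x, y, z, hsplit, hvy, hlen2, hmem⟩ := hpump _ hwL hlen
    obtain ⟨⟨A, B, C, D, hshape⟩, hnot⟩ := ABWork.key hp1 hsplit hvy hlen2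
    rw [hg] at hmem
    obtain ⟨u', hu', v', hv', hsh⟩ := hmem
    obtain ⟨n1, hn1, hu'eq⟩ := hu'
    obtain ⟨m1, hm1, hv'eq⟩ := hv'
    obtain ⟨eA, eB, eC, eD⟩ := ABWork.shuffle_char hsh hn1 hm1 hu'eq hv'eq hshape
    exact hnot ⟨n1, m1, hn1, hm1, by rw [hshape, eA, eB, eC, eD]⟩
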